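/- Let F_0(x,y) = 1/(1-y)² and define recursively F_r(x,y) = (F_{r-1}(x,x^r)·x^r − F_{r-1}(x,y)·y) / ((x^r − y)(1 − y)) as formal power series (or rational functions). Then F_r(x,y) = Σ_{k,j ≥ 0} α_r(k,j) x^k y^j, where α_r(k,j) counts pairs ((c_1,...,c_r),(d_0,...,d_r)) with 0 ≤ c_1 ≤ ⋯ ≤ c_r, Σ c_i = k, −j ≤ d_0 ≤ 0, d_0 ≤ d_1 ≤ ⋯ ≤ d_r, d_i ≤ c_i. -/

import Mathlib

/-- `alpha r k j` counts pairs `((c_1,…,c_r),(d_0,d_1,…,d_r))` with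
`0 ≤ c_1 ≤ ⋯ ≤ c_r`, `∑ c_i = k`, `-j ≤ d_0 ≤ 0`, `d_0 ≤ d_1 ≤ ⋯ ≤ d_r`,
and `d_i ≤ c_i` for `1 ≤ i ≤ r`. -/
noncomputable def alpha (r k j : ℕ) : ℕ :=
  Nat.card {p : (Fin r → ℕ) × (Fin (r + 1) → ℤ) //
    Monotone p.1 ∧ (∑ i, p.1 i) = k ∧
    -(j : ℤ) ≤ p.2 0 ∧ p.2 0 ≤ 0 ∧ Monotone p.2 ∧
    ∀ i : Fin r, p.2 i.succ ≤ (p.1 i : ℤ)}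

/-- The recursively defined functions `F_r(x,y)`:
`F_0(x,y) = 1/(1-y)²` and
`F_r(x,y) = (F_{r-1}(x,x^r)·x^r − F_{r-1}(x,y)·y) / ((x^r − y)(1 − y))`. -/
noncomputable def F {K : Type*} [Field K] : ℕ → K → K → K
  | 0, _, y => 1 / (1 - y) ^ 2
  | r + 1, x, y =>
      (F r x (x ^ (r + 1)) * x ^ (r + 1) - F r x y * y) / ((x ^ (r + 1) - y) * (1 - y))

open Finset

def ACond (r k j : ℕ) (p : (Fin r → ℕ) × (Fin (r + 1) → ℤ)) : Prop :=
  Monotone p.1 ∧ (∑ i, p.1 i) = k ∧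
    -(j : ℤ) ≤ p.2 0 ∧ p.2 0 ≤ 0 ∧ Monotone p.2 ∧
    ∀ i : Fin r, p.2 i.succ ≤ (p.1 i : ℤ)

lemma ACond_def (r k j : ℕ) (p : (Fin r → ℕ) × (Fin (r + 1) → ℤ)) :
    ACond r k j p ↔ (Monotone p.1 ∧ (∑ i, p.1 i) = k ∧
    -(j : ℤ) ≤ p.2 0 ∧ p.2 0 ≤ 0 ∧ Monotone p.2 ∧
    ∀ i : Fin r, p.2 i.succ ≤ (p.1 i : ℤ)) := Iff.rfl

lemma alpha_def (r k j : ℕ) : alpha r k j = Nat.card {p // ACond r k j p} := rfl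

lemma c_le {r k j : ℕ} {p} (hp : ACond r k j p) (i : Fin r) : p.1 i ≤ k :=
  hp.2.1 ▸ Finset.single_le_sum (fun i _ => Nat.zero_le _) (Finset.mem_univ i)

lemma d_lb {r k j : ℕ} {p} (hp : ACond r k j p) (i : Fin (r+1)) : -(j:ℤ) ≤ p.2 i :=
  hp.2.2.1.trans (hp.2.2.2.2.1 (Fin.zero_le i))

lemma d_ub {r k j : ℕ} {p} (hp : ACond r k j p) (i : Fin (r+1)) : p.2 i ≤ (k:ℤ) := by
  induction i using Fin.cases with
  | zero => exact hp.2.2.2.1.trans (by positivity)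
  | succ i => exact (hp.2.2.2.2.2 i).trans (by exact_mod_cast c_le hp i)

def toBounded (r k j : ℕ) (p : {p // ACond r k j p}) :
    (Fin r → Fin (k+1)) × (Fin (r+1) → Fin (k+j+1)) :=
  (fun i => ⟨p.1.1 i, Nat.lt_succ_of_le (c_le p.2 i)⟩,
   fun i => ⟨(p.1.2 i + j).toNat, by
      have h1 := d_ub p.2 i
      omega⟩)

lemma toBounded_inj (r k j : ℕ) : Function.Injective (toBounded r k j) := by
  rintro ⟨⟨c, d⟩, hp⟩ ⟨⟨c', d'⟩, hq⟩ h
  have h1 := congrArg Prod.fst h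
  have h2 := congrArg Prod.snd h
  simp only [toBounded, funext_iff, Fin.mk.injEq] at h1 h2
  ext i
  · exact h1 i
  · have := h2 i
    have l1 := d_lb hp i
    have l2 := d_lb hq i
    simp only at l1 l2 ⊢
    omega

instance ACond.finite (r k j : ℕ) : Finite {p // ACond r k j p} :=
  Finite.of_injective _ (toBounded_inj r k j)

lemma alpha_le (r k j : ℕ) : alpha r k j ≤ (k+1)^r * (k+j+1)^(r+1) := by
  rw [alpha_def]
  calc Nat.card {p // ACond r k j p}
      ≤ Nat.card ((Fin r → Fin (k+1)) × (Fin (r+1) → Fin (k+j+1))) :=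
        Nat.card_le_card_of_injective _ (toBounded_inj r k j)
    _ = (k+1)^r * (k+j+1)^(r+1) := by simp

lemma ACond_mk {r k j : ℕ} {c : Fin r → ℕ} {d : Fin (r+1) → ℤ}
    (h1 : Monotone c) (h2 : (∑ i, c i) = k) (h3 : -(j : ℤ) ≤ d 0) (h4 : d 0 ≤ 0)
    (h5 : Monotone d) (h6 : ∀ i : Fin r, d i.succ ≤ (c i : ℤ)) : ACond r k j (c, d) :=
  (ACond_def r k j (c, d)).2 ⟨h1, h2, h3, h4, h5, h6⟩

lemma ACond_elim {r k j : ℕ} {c : Fin r → ℕ} {d : Fin (r+1) → ℤ} (h : ACond r k j (c, d)) :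
    Monotone c ∧ (∑ i, c i) = k ∧ -(j : ℤ) ≤ d 0 ∧ d 0 ≤ 0 ∧ Monotone d ∧
    ∀ i : Fin r, d i.succ ≤ (c i : ℤ) := (ACond_def r k j (c, d)).1 h

section Step
variable (r k j : ℕ)

def TT :=
  {x : (Fin (j+1) × Fin (k/(r+1)+1)) × ((Fin r → ℕ) × (Fin (r+1) → ℤ)) //
    ACond r (k - x.1.2.1*(r+1)) (x.1.2.1 + x.1.1.1) x.2}

variable {r k j}

lemma fwd_t_lt {c : Fin (r+1) → ℕ} {d : Fin (r+2) → ℤ} (hp : ACond (r+1) k j (c, d)) :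
    (-d 0).toNat < j + 1 := by
  obtain ⟨h1, h2, h3, h4, h5, h6⟩ := ACond_elim hp
  omega

lemma fwd_m_lt {c : Fin (r+1) → ℕ} {d : Fin (r+2) → ℤ} (hp : ACond (r+1) k j (c, d)) :
    c 0 < k/(r+1)+1 := by
  obtain ⟨h1, h2, h3, h4, h5, h6⟩ := ACond_elim hp
  have hs : c 0 * (r+1) ≤ ∑ i, c i := by
    calc c 0 * (r+1) = ∑ _i : Fin (r+1), c 0 := by simp [mul_comm]
    _ ≤ ∑ i, c i := Finset.sum_le_sum (fun i _ => h1 (Fin.zero_le i))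
  rw [h2] at hs
  exact Nat.lt_succ_of_le ((Nat.le_div_iff_mul_le (Nat.succ_pos r)).2 hs)

lemma fwd_mem {c : Fin (r+1) → ℕ} {d : Fin (r+2) → ℤ} (hp : ACond (r+1) k j (c, d)) :
    ACond r (k - c 0 * (r+1)) (c 0 + (-d 0).toNat)
      (fun i => c i.succ - c 0, fun i => d i.succ - c 0) := by
  obtain ⟨h1, h2, h3, h4, h5, h6⟩ := ACond_elim hp
  have hc0 : ∀ i : Fin (r+1), c 0 ≤ c i := fun i => h1 (Fin.zero_le i)
  refine ACond_mk ?_ ?_ ?_ ?_ ?_ ?_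
  · intro a b hab
    exact Nat.sub_le_sub_right (h1 (Fin.succ_le_succ_iff.2 hab)) _
  · have key : ∑ i : Fin r, (c i.succ - c 0) + r * c 0 = ∑ i : Fin r, c i.succ := by
      calc ∑ i : Fin r, (c i.succ - c 0) + r * c 0
          = ∑ i : Fin r, ((c i.succ - c 0) + c 0) := by
            rw [Finset.sum_add_distrib]; simp [mul_comm]
        _ = ∑ i : Fin r, c i.succ := Finset.sum_congr rfl fun i _ => Nat.sub_add_cancel (hc0 _)
    have h2' : c 0 + ∑ i : Fin r, c i.succ = k := by rw [← h2, Fin.sum_univ_succ]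
    have hr : c 0 * (r+1) = c 0 + r * c 0 := by ring
    omega
  · have hd1 : d 0 ≤ d (0 : Fin (r+1)).succ := h5 (Fin.zero_le _)
    push_cast
    omega
  · have := h6 0
    omega
  · intro a b hab
    have := h5 (Fin.succ_le_succ_iff.2 hab)
    simp only
    omega
  · intro i
    have hh := h6 i.succ
    have hcast : (((c i.succ - c 0 : ℕ)) : ℤ) = (c i.succ : ℤ) - c 0 := by
      rw [Nat.cast_sub (hc0 i.succ)]
    simp only [hcast]
    omega

def fwd (p : {p // ACond (r+1) k j p}) : TT r k j :=
  ⟨((⟨(-p.1.2 0).toNat, fwd_t_lt (c := p.1.1) (d := p.1.2) p.2⟩,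
     ⟨p.1.1 0, fwd_m_lt (c := p.1.1) (d := p.1.2) p.2⟩),
    (fun i => p.1.1 i.succ - p.1.1 0, fun i => p.1.2 i.succ - p.1.1 0)),
   fwd_mem p.2⟩

lemma hm_le (m : Fin (k/(r+1)+1)) : m.1 * (r+1) ≤ k := by
  have hm2 : m.1 ≤ k / (r+1) := Nat.lt_succ_iff.1 m.2
  calc m.1 * (r+1) ≤ k/(r+1) * (r+1) := Nat.mul_le_mul_right _ hm2
    _ ≤ k := Nat.div_mul_le_self k (r+1)

lemma bwd_mem {t : Fin (j+1)} {m : Fin (k/(r+1)+1)} {c : Fin r → ℕ} {d : Fin (r+1) → ℤ}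
    (hq : ACond r (k - m.1*(r+1)) (m.1 + t.1) (c, d)) :
    ACond (r+1) k j (Fin.cases m.1 (fun i => c i + m.1),
      Fin.cases (-(t.1 : ℤ)) (fun i => d i + m.1)) := by
  obtain ⟨h1, h2, h3, h4, h5, h6⟩ := ACond_elim hq
  have hm : m.1 * (r+1) ≤ k := hm_le m
  refine ACond_mk ?_ ?_ ?_ ?_ ?_ ?_
  · intro a b hab
    induction b using Fin.cases with
    | zero =>
      rw [Fin.le_zero_iff] at hab
      subst hab; exact le_refl _
    | succ b =>
      induction a using Fin.cases with
      | zero => simp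
      | succ a =>
        simp only [Fin.cases_succ]
        exact Nat.add_le_add_right (h1 (Fin.succ_le_succ_iff.1 hab)) _
  · rw [Fin.sum_univ_succ]
    simp only [Fin.cases_zero, Fin.cases_succ]
    rw [Finset.sum_add_distrib, h2]
    simp only [Finset.sum_const, card_univ, Fintype.card_fin, smul_eq_mul]
    have hr : m.1 * (r+1) = m.1 + m.1 * r := by ring
    have hr2 : m.1 * r = r * m.1 := by ring
    omega
  · simp only [Fin.cases_zero]
    have := t.2
    push_cast
    omega
  · simp only [Fin.cases_zero]
    omega
  · intro a b hab
    induction b using Fin.cases with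
    | zero =>
      rw [Fin.le_zero_iff] at hab
      subst hab; exact le_refl _
    | succ b =>
      induction a using Fin.cases with
      | zero =>
        simp only [Fin.cases_zero, Fin.cases_succ]
        have hb0 : d 0 ≤ d b := h5 (Fin.zero_le b)
        push_cast at h3 ⊢
        omega
      | succ a =>
        simp only [Fin.cases_succ]
        have := h5 (Fin.succ_le_succ_iff.1 hab)
        omega
  · intro i
    induction i using Fin.cases with
    | zero =>
      simp only [Fin.succ_zero_eq_one, Fin.cases_zero]
      have e0 : ((1 : Fin (r+2))) = (0 : Fin (r+1)).succ := rfl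
      rw [e0, Fin.cases_succ]
      omega
    | succ i =>
      simp only [Fin.cases_succ]
      have := h6 i
      push_cast at this ⊢
      omega

def bwd (x : TT r k j) : {p // ACond (r+1) k j p} :=
  match x with
  | ⟨((t, m), (c, d)), hq⟩ =>
    ⟨(Fin.cases m.1 (fun i => c i + m.1),
      Fin.cases (-(t.1 : ℤ)) (fun i => d i + m.1)), bwd_mem hq⟩

lemma fwd_bwd (x : TT r k j) : fwd (bwd x) = x := by
  obtain ⟨⟨⟨t, m⟩, c, d⟩, hq⟩ := x
  obtain ⟨h1, h2, h3, h4, h5, h6⟩ := ACond_elim hq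
  apply Subtype.ext
  simp only [fwd, bwd]
  refine Prod.ext (Prod.ext (Fin.ext ?_) (Fin.ext ?_))
    (Prod.ext (funext fun i => ?_) (funext fun i => ?_)) <;>
    simp only [Fin.cases_zero, Fin.cases_succ] <;> omega

lemma fwd_inj : Function.Injective (fwd (r := r) (k := k) (j := j)) := by
  rintro ⟨⟨c, d⟩, hp⟩ ⟨⟨c', d'⟩, hp'⟩ h
  obtain ⟨h1, h2, h3, h4, h5, h6⟩ := ACond_elim hp
  obtain ⟨g1, g2, g3, g4, g5, g6⟩ := ACond_elim hp'
  have hc0 : ∀ i : Fin (r+1), c 0 ≤ c i := fun i => h1 (Fin.zero_le i)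
  have gc0 : ∀ i : Fin (r+1), c' 0 ≤ c' i := fun i => g1 (Fin.zero_le i)
  have ht : (-d 0).toNat = (-d' 0).toNat := congrArg (fun z => z.1.1.1.1) h
  have e0 : c 0 = c' 0 := congrArg (fun z => z.1.1.2.1) h
  have hc : ∀ i : Fin r, c i.succ - c 0 = c' i.succ - c' 0 :=
    fun i => congrArg (fun z => z.1.2.1 i) h
  have hd : ∀ i : Fin (r+1), d i.succ - (c 0 : ℤ) = d' i.succ - (c' 0 : ℤ) :=
    fun i => congrArg (fun z => z.1.2.2 i) h
  have et : d 0 = d' 0 := by omega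
  apply Subtype.ext
  refine Prod.ext ?_ ?_
  · funext i
    induction i using Fin.cases with
    | zero => exact e0
    | succ i =>
      have := hc i
      have := hc0 i.succ
      have := gc0 i.succ
      simp only at this ⊢
      omega
  · funext i
    induction i using Fin.cases with
    | zero => exact et
    | succ i =>
      have := hd i
      simp only at this ⊢
      omega

lemma card_sigma'' {ι : Type*} [Fintype ι] (f : ι → Type*) [∀ i, Finite (f i)] :
    Nat.card (Σ i, f i) = ∑ i, Nat.card (f i) := by
  letI := fun i => Fintype.ofFinite (f i)
  simp [Nat.card_eq_fintype_card]

lemma alpha_succ (r k j : ℕ) : alpha (r+1) k j =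
    ∑ t ∈ Finset.range (j+1), ∑ m ∈ Finset.range (k/(r+1)+1),
      alpha r (k - m*(r+1)) (m + t) := by
  rw [alpha_def]
  have hb : Function.Bijective (fwd (r := r) (k := k) (j := j)) :=
    ⟨fwd_inj, fun x => ⟨bwd x, fwd_bwd x⟩⟩
  rw [Nat.card_eq_of_bijective _ hb]
  have := Nat.card_congr
    (Equiv.subtypeProdEquivSigmaSubtype
      (fun (a : Fin (j+1) × Fin (k/(r+1)+1)) (b : (Fin r → ℕ) × (Fin (r+1) → ℤ)) =>
        ACond r (k - a.2.1*(r+1)) (a.2.1 + a.1.1) b))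
  rw [TT, this, card_sigma'']
  rw [Fintype.sum_prod_type]
  rw [← Fin.sum_univ_eq_sum_range (fun t => ∑ m ∈ Finset.range (k/(r+1)+1), alpha r (k - m*(r+1)) (m + t)) (j+1)]
  refine Finset.sum_congr rfl fun t _ => ?_
  rw [← Fin.sum_univ_eq_sum_range (fun m => alpha r (k - m*(r+1)) (m + t.1)) (k/(r+1)+1)]
  refine Finset.sum_congr rfl fun m _ => ?_
  rw [alpha_def]

lemma alpha_le' (r k j : ℕ) : alpha r k j ≤ (k+1)^(2*r+1) * (j+1)^(r+1) := by
  refine (alpha_le r k j).trans ?_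
  have h1 : k + j + 1 ≤ (k+1) * (j+1) := by
    have : (k+1) * (j+1) = k*j + (k + j + 1) := by ring
    omega
  calc (k+1)^r * (k+j+1)^(r+1) ≤ (k+1)^r * ((k+1) * (j+1))^(r+1) :=
        Nat.mul_le_mul_left _ (Nat.pow_le_pow_left h1 _)
    _ = (k+1)^(2*r+1) * (j+1)^(r+1) := by
        rw [mul_pow, ← mul_assoc, ← pow_add]
        congr 2
        omega

lemma ACond_elim' {r k j : ℕ} {c : Fin r → ℕ} {d : Fin (r+1) → ℤ} (h : ACond r k j (c, d)) :
    Monotone c ∧ (∑ i, c i) = k ∧ -(j : ℤ) ≤ d 0 ∧ d 0 ≤ 0 ∧ Monotone d ∧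
    ∀ i : Fin r, d i.succ ≤ (c i : ℤ) := (ACond_def r k j (c, d)).1 h

lemma alpha_zero (k j : ℕ) : alpha 0 k j = if k = 0 then j + 1 else 0 := by
  rw [alpha_def]
  split_ifs with hk
  · subst hk
    have e : {p // ACond 0 0 j p} ≃ Fin (j+1) :=
      { toFun := fun p => ⟨(p.1.2 0 + j).toNat, by
          obtain ⟨h1, h2, h3, h4, h5, h6⟩ := (ACond_def 0 0 j p.1).1 p.2
          omega⟩
        invFun := fun i => ⟨(fun a => a.elim0, fun _ => (i : ℤ) - j), by
          rw [ACond_def]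
          exact ⟨fun a b _ => le_refl _, by simp, by
            show -(j:ℤ) ≤ (i:ℤ) - j
            have := i.2
            omega, by
            show (i:ℤ) - j ≤ 0
            have := i.2
            omega, monotone_const, fun a => a.elim0⟩⟩
        left_inv := fun p => by
          obtain ⟨⟨c, d⟩, hp⟩ := p
          obtain ⟨h1, h2, h3, h4, h5, h6⟩ := ACond_elim' hp
          apply Subtype.ext
          refine Prod.ext (funext fun a => a.elim0) (funext fun i => ?_)
          have hi : i = 0 := Fin.fin_one_eq_zero i
          subst hi
          show ((d 0 + j).toNat : ℤ) - j = d 0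
          omega
        right_inv := fun i => by
          apply Fin.ext
          show ((i:ℤ) - j + j).toNat = i.1
          have := i.2
          omega }
    rw [Nat.card_congr e, Nat.card_eq_fintype_card, Fintype.card_fin]
  · have hie : IsEmpty {p // ACond 0 k j p} := by
      refine ⟨fun p => ?_⟩
      obtain ⟨h1, h2, h3, h4, h5, h6⟩ := (ACond_def 0 k j p.1).1 p.2
      simp at h2
      exact hk h2.symm
    exact Nat.card_of_isEmpty

/-! ### Summability lemmas -/

lemma summable_pow_one_add (N : ℕ) {t : ℝ} (h0 : 0 ≤ t) (h1 : t < 1) :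
    Summable (fun k : ℕ => ((k : ℝ) + 1) ^ N * t ^ k) := by
  rcases eq_or_lt_of_le h0 with h | h
  · apply summable_of_ne_finset_zero (s := {0})
    intro b hb
    simp only [Finset.mem_singleton] at hb
    rw [← h, zero_pow hb, mul_zero]
  · have hs : Summable (fun k : ℕ => (k : ℝ) ^ N * t ^ k) :=
      summable_pow_mul_geometric_of_norm_lt_one N
        (by rwa [Real.norm_eq_abs, abs_of_nonneg h0])
    have h2 : Summable (fun k : ℕ => ((k : ℝ) + 1) ^ N * t ^ (k + 1)) := by
      have := (summable_nat_add_iff 1).2 hs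
      refine this.congr fun k => ?_
      push_cast
      ring
    refine ((h2.mul_left t⁻¹).congr fun k => ?_)
    rw [pow_succ]
    field_simp

lemma summable_weight (A B : ℕ) {x y : ℝ} (hx : |x| < 1) (hy : |y| < 1) :
    Summable (fun p : ℕ × ℕ =>
      (((p.1 : ℝ) + 1) ^ A * |x| ^ p.1) * (((p.2 : ℝ) + 1) ^ B * |y| ^ p.2)) :=
  (summable_pow_one_add A (abs_nonneg x) hx).mul_of_nonneg
    (summable_pow_one_add B (abs_nonneg y) hy)
    (fun k => by positivity) (fun j => by positivity)

lemma summable_of_le_weight (A B : ℕ) {x y : ℝ} (hx : |x| < 1) (hy : |y| < 1)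
    (f : ℕ × ℕ → ℕ) (hf : ∀ p : ℕ × ℕ, (f p : ℝ) ≤ ((p.1 : ℝ) + 1) ^ A * ((p.2 : ℝ) + 1) ^ B) :
    Summable (fun p : ℕ × ℕ => (f p : ℝ) * x ^ p.1 * y ^ p.2) := by
  refine Summable.of_norm_bounded (summable_weight A B hx hy) fun p => ?_
  have h1 : ‖(f p : ℝ) * x ^ p.1 * y ^ p.2‖ = (f p : ℝ) * |x| ^ p.1 * |y| ^ p.2 := by
    rw [norm_mul, norm_mul, Real.norm_eq_abs, Real.norm_eq_abs, Real.norm_eq_abs,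
      abs_pow, abs_pow, Nat.abs_cast]
  rw [h1]
  have h2 : (f p : ℝ) * |x| ^ p.1 * |y| ^ p.2 ≤
      (((p.1 : ℝ) + 1) ^ A * ((p.2 : ℝ) + 1) ^ B) * |x| ^ p.1 * |y| ^ p.2 := by
    have h3 := hf p
    have h4 : (0:ℝ) ≤ |x| ^ p.1 := by positivity
    have h5 : (0:ℝ) ≤ |y| ^ p.2 := by positivity
    exact mul_le_mul_of_nonneg_right (mul_le_mul_of_nonneg_right h3 h4) h5
  refine h2.trans (le_of_eq ?_)
  ring

lemma alpha_cast_le (r k j : ℕ) :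
    ((alpha r k j : ℝ)) ≤ ((k : ℝ) + 1) ^ (2*r+1) * ((j : ℝ) + 1) ^ (r+1) := by
  have h := alpha_le' r k j
  calc ((alpha r k j : ℝ)) ≤ (((k+1)^(2*r+1) * (j+1)^(r+1) : ℕ) : ℝ) := by exact_mod_cast h
    _ = ((k : ℝ) + 1) ^ (2*r+1) * ((j : ℝ) + 1) ^ (r+1) := by push_cast; ring

lemma summable_alpha (r : ℕ) {x y : ℝ} (hx : |x| < 1) (hy : |y| < 1) :
    Summable (fun p : ℕ × ℕ => (alpha r p.1 p.2 : ℝ) * x ^ p.1 * y ^ p.2) :=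
  summable_of_le_weight (2*r+1) (r+1) hx hy _ (fun p => alpha_cast_le r p.1 p.2)

/-! ### Generic tsum helpers -/

lemma tsum_fst_zero (f : ℕ × ℕ → ℝ) (hsupp : ∀ p : ℕ × ℕ, p.1 ≠ 0 → f p = 0) :
    ∑' p : ℕ × ℕ, f p = ∑' j : ℕ, f (0, j) := by
  symm
  apply Function.Injective.tsum_eq (g := fun j : ℕ => ((0 : ℕ), j))
  · intro a b hab
    simpa using hab
  · intro p hp
    rcases p with ⟨k, j⟩
    by_contra hmem
    have hk : k ≠ 0 := by
      rintro rfl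
      exact hmem ⟨j, rfl⟩
    exact hp (hsupp _ hk)

lemma cauchy_helper {y : ℝ} (hy : |y| < 1) (c : ℕ → ℝ)
    (hc : Summable fun t => ‖c t * y ^ t‖) :
    ∑' j : ℕ, (∑ t ∈ Finset.range (j+1), c t) * y ^ j = (∑' t, c t * y ^ t) * (1 - y)⁻¹ := by
  have hy' : ‖y‖ < 1 := by rwa [Real.norm_eq_abs]
  have hgeo : Summable fun s : ℕ => ‖y ^ s‖ := by
    simp only [norm_pow]
    exact summable_geometric_of_lt_one (norm_nonneg y) hy'
  have key := tsum_mul_tsum_eq_tsum_sum_antidiagonal_of_summable_norm hc hgeo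
  rw [tsum_geometric_of_norm_lt_one hy'] at key
  rw [key]
  refine tsum_congr fun n => ?_
  rw [Finset.Nat.sum_antidiagonal_eq_sum_range_succ_mk, Finset.sum_mul]
  refine Finset.sum_congr rfl fun i hi => ?_
  rw [Finset.mem_range] at hi
  rw [mul_assoc, ← pow_add]
  congr 2
  omega


lemma tsum_one_add_mul_geom {y : ℝ} (hy : |y| < 1) :
    ∑' j : ℕ, ((j : ℝ) + 1) * y ^ j = 1 / (1 - y) ^ 2 := by
  have hy' : ‖y‖ < 1 := by rwa [Real.norm_eq_abs]
  have h1 := tsum_coe_mul_geometric_of_norm_lt_one hy'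
  have h2 := tsum_geometric_of_norm_lt_one hy'
  have s1 : Summable (fun n : ℕ => (n : ℝ) * y ^ n) := by
    have := summable_pow_mul_geometric_of_norm_lt_one (R := ℝ) 1 hy'
    simpa using this
  have s2 : Summable (fun n : ℕ => y ^ n) := summable_geometric_of_norm_lt_one hy'
  have hne : (1 : ℝ) - y ≠ 0 := by
    intro hc
    rw [sub_eq_zero] at hc
    rw [← hc] at hy
    simp at hy
  calc ∑' j : ℕ, ((j : ℝ) + 1) * y ^ j = ∑' j : ℕ, ((j : ℝ) * y ^ j + y ^ j) :=
        tsum_congr fun j => by ring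
    _ = y / (1 - y) ^ 2 + (1 - y)⁻¹ := by rw [Summable.tsum_add s1 s2, h1, h2]
    _ = 1 / (1 - y) ^ 2 := by field_simp; ring

lemma antidiag_group {X y : ℝ} (a : ℕ → ℝ)
    (hs : Summable (fun q : ℕ × ℕ => a (q.1+q.2) * X ^ q.1 * y ^ q.2)) :
    ∑' q : ℕ × ℕ, a (q.1+q.2) * X ^ q.1 * y ^ q.2
      = ∑' n : ℕ, a n * ∑ i ∈ Finset.range (n+1), X ^ i * y ^ (n - i) := by
  set f : ℕ × ℕ → ℝ := fun q => a (q.1+q.2) * X ^ q.1 * y ^ q.2 with hfdef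
  have hsum : Summable (fun σ : Σ n : ℕ, {p : ℕ × ℕ // p ∈ Finset.HasAntidiagonal.antidiagonal n} =>
      f (Finset.HasAntidiagonal.sigmaAntidiagonalEquivProd σ)) :=
    (Finset.HasAntidiagonal.sigmaAntidiagonalEquivProd.summable_iff).2 hs
  calc (∑' q : ℕ × ℕ, f q)
      = ∑' σ : Σ n : ℕ, {p : ℕ × ℕ // p ∈ Finset.HasAntidiagonal.antidiagonal n},
          f (Finset.HasAntidiagonal.sigmaAntidiagonalEquivProd σ) :=
        (Finset.HasAntidiagonal.sigmaAntidiagonalEquivProd.tsum_eq f).symm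
    _ = ∑' (n : ℕ), ∑' (c : {p : ℕ × ℕ // p ∈ Finset.HasAntidiagonal.antidiagonal n}), f c :=
        hsum.tsum_sigma
    _ = ∑' n : ℕ, ∑ p ∈ Finset.HasAntidiagonal.antidiagonal n, f p :=
        tsum_congr fun n => Finset.tsum_subtype _ f
    _ = ∑' n : ℕ, a n * ∑ i ∈ Finset.range (n+1), X ^ i * y ^ (n - i) := by
        refine tsum_congr fun n => ?_
        rw [Finset.Nat.sum_antidiagonal_eq_sum_range_succ_mk f n, Finset.mul_sum]
        refine Finset.sum_congr rfl fun i hi => ?_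
        rw [Finset.mem_range] at hi
        simp only [hfdef]
        have hin : i + (n - i) = n := by omega
        rw [hin]
        ring

theorem stmt6 (r : ℕ) (x y : ℝ) (hx : |x| < 1) (hy : |y| < 1)
    (h : ∀ m : ℕ, 1 ≤ m → m ≤ r → x ^ m ≠ y) :
    ∑' p : ℕ × ℕ, (alpha r p.1 p.2 : ℝ) * x ^ p.1 * y ^ p.2 = F r x y := by
  induction r generalizing y with
  | zero =>
    rw [tsum_fst_zero _ (fun p hp => by simp [alpha_zero, hp])]
    show ∑' j : ℕ, ((alpha 0 0 j : ℝ)) * x ^ 0 * y ^ j = 1 / (1 - y) ^ 2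
    rw [← tsum_one_add_mul_geom hy]
    refine tsum_congr fun j => ?_
    rw [alpha_zero, if_pos rfl]
    push_cast
    ring
  | succ r ih =>
    have hy1 : (1 : ℝ) - y ≠ 0 := by
      intro hc; rw [sub_eq_zero] at hc; rw [← hc] at hy; simp at hy
    by_cases hx0 : x = 0
    · -- x = 0 case
      subst hx0
      have hy0 : y ≠ 0 := fun hc => (h 1 le_rfl (by omega) (by simp [hc])).elim
      have hsupp : ∀ p : ℕ × ℕ, p.1 ≠ 0 →
          (alpha (r+1) p.1 p.2 : ℝ) * (0:ℝ) ^ p.1 * y ^ p.2 = 0 := by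
        intro p hp
        rw [zero_pow hp]; ring
      rw [tsum_fst_zero _ hsupp]
      have hterm : ∀ j : ℕ, (alpha (r+1) 0 j : ℝ) * (0:ℝ) ^ (0:ℕ) * y ^ j =
          (∑ t ∈ Finset.range (j+1), (alpha r 0 t : ℝ)) * y ^ j := by
        intro j
        rw [alpha_succ]
        have : ∀ t : ℕ, ∑ m ∈ Finset.range (0/(r+1)+1), alpha r (0 - m*(r+1)) (m + t) =
            alpha r 0 t := by
          intro t
          rw [Nat.zero_div, Finset.sum_range_one]
          simp
        simp only [this]
        push_cast
        ring
      rw [tsum_congr hterm]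
      have hc : Summable fun t => ‖(alpha r 0 t : ℝ) * y ^ t‖ := by
        refine Summable.of_norm_bounded
          (((summable_pow_one_add (r+1) (abs_nonneg y) hy)).mul_left 1) fun t => ?_
        have h1 : ‖‖(alpha r 0 t : ℝ) * y ^ t‖‖ = (alpha r 0 t : ℝ) * |y| ^ t := by
          rw [norm_norm, norm_mul, Real.norm_eq_abs, Real.norm_eq_abs, abs_pow, Nat.abs_cast]
        rw [h1]
        have h2 := alpha_cast_le r 0 t
        simp only [Nat.cast_zero, zero_add, one_pow, one_mul] at h2
        calc (alpha r 0 t : ℝ) * |y| ^ t ≤ ((t:ℝ)+1)^(r+1) * |y| ^ t := by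
              have : (0:ℝ) ≤ |y|^t := by positivity
              exact mul_le_mul_of_nonneg_right h2 this
          _ = 1 * (((t:ℝ)+1)^(r+1) * |y| ^ t) := by ring
      rw [cauchy_helper hy _ hc]
      have hS : ∑' t : ℕ, (alpha r 0 t : ℝ) * y ^ t = F r 0 y := by
        have hmain := ih y hy (fun m hm1 hm2 => by
          rw [zero_pow (by omega : m ≠ 0)]; exact fun hc => hy0 hc.symm)
        rw [tsum_fst_zero _ (fun p hp => by rw [zero_pow hp]; ring)] at hmain
        rw [← hmain]
        refine tsum_congr fun t => ?_
        norm_num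
      rw [hS]
      show _ = (F r 0 (0 ^ (r + 1)) * 0 ^ (r + 1) - F r 0 y * y) / ((0 ^ (r + 1) - y) * (1 - y))
      rw [zero_pow (by omega : r + 1 ≠ 0)]
      field_simp
      ring
    · -- main case : x ≠ 0
      set X := x ^ (r+1) with hXdef
      have hX : |X| < 1 := by
        rw [hXdef, abs_pow]
        exact pow_lt_one₀ (abs_nonneg x) hx (by omega)
      have hXy : X ≠ y := h (r+1) (by omega) le_rfl
      have hd : X - y ≠ 0 := sub_ne_zero.2 hXy
      have hxk : ∀ k : ℕ, x ^ k ≠ 0 := fun k => pow_ne_zero k hx0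
      have habs : 0 < |x| := abs_pos.2 hx0
      -- IH at y and at X
      have hIHy : ∑' p : ℕ × ℕ, (alpha r p.1 p.2 : ℝ) * x ^ p.1 * y ^ p.2 = F r x y :=
        ih y hy (fun m hm1 hm2 => h m hm1 (by omega))
      have hIHX : ∑' p : ℕ × ℕ, (alpha r p.1 p.2 : ℝ) * x ^ p.1 * X ^ p.2 = F r x X := by
        refine ih X hX (fun m hm1 hm2 => ?_)
        intro hc
        have : |x| ^ (r+1) < |x| ^ m := by
          exact pow_lt_pow_right_of_lt_one₀ habs hx (by omega)
        rw [← abs_pow, ← abs_pow, hc] at this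
        exact lt_irrefl _ this
      -- b function
      set bnat : ℕ → ℕ → ℕ :=
        fun k t => ∑ m ∈ Finset.range (k/(r+1)+1), alpha r (k - m*(r+1)) (m + t) with hbdef
      have hble : ∀ k t, bnat k t ≤ alpha (r+1) k t := by
        intro k t
        rw [alpha_succ]
        exact Finset.single_le_sum (f := fun t' => ∑ m ∈ Finset.range (k/(r+1)+1),
          alpha r (k - m*(r+1)) (m + t')) (fun i _ => Nat.zero_le _)
          (Finset.self_mem_range_succ t)
      -- summabilities
      have hSa_y := summable_alpha r hx hy
      have hSa_X := summable_alpha r hx hX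
      have hSA := summable_alpha (r+1) hx hy
      have hSb : Summable (fun p : ℕ × ℕ => (bnat p.1 p.2 : ℝ) * x ^ p.1 * y ^ p.2) := by
        refine summable_of_le_weight (2*(r+1)+1) ((r+1)+1) hx hy (fun p => bnat p.1 p.2)
          (fun p => ?_)
        calc ((bnat p.1 p.2 : ℝ)) ≤ (alpha (r+1) p.1 p.2 : ℝ) := by exact_mod_cast hble p.1 p.2
          _ ≤ _ := alpha_cast_le (r+1) p.1 p.2
      -- the B_k and A_k quantities
      set B : ℕ → ℝ := fun k => ∑' t : ℕ, (bnat k t : ℝ) * y ^ t with hBdef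
      set AX : ℕ → ℝ := fun k => ∑' n : ℕ, (alpha r k n : ℝ) * X ^ n with hAXdef
      set AY : ℕ → ℝ := fun k => ∑' n : ℕ, (alpha r k n : ℝ) * y ^ n with hAYdef
      have hAXs : ∀ k, Summable (fun n : ℕ => (alpha r k n : ℝ) * X ^ n) := by
        intro k
        refine ((hSa_X.prod_factor k).mul_left ((x ^ k)⁻¹)).congr fun n => ?_
        field_simp
      have hAYs : ∀ k, Summable (fun n : ℕ => (alpha r k n : ℝ) * y ^ n) := by
        intro k
        refine ((hSa_y.prod_factor k).mul_left ((x ^ k)⁻¹)).congr fun n => ?_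
        field_simp
      have hBs : ∀ k, Summable (fun t : ℕ => ‖(bnat k t : ℝ) * y ^ t‖) := by
        intro k
        refine (((hSb.prod_factor k).mul_left ((x ^ k)⁻¹)).congr (fun t => by
          field_simp : ∀ t : ℕ, (x ^ k)⁻¹ * ((bnat k t : ℝ) * x ^ k * y ^ t) =
            (bnat k t : ℝ) * y ^ t)).abs
      -- Step A : LHS = (∑' k, x^k * B k) * (1-y)⁻¹
      have stepA : ∑' p : ℕ × ℕ, (alpha (r+1) p.1 p.2 : ℝ) * x ^ p.1 * y ^ p.2 =
          (∑' k : ℕ, x ^ k * B k) * (1 - y)⁻¹ := by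
        rw [Summable.tsum_prod hSA, ← tsum_mul_right]
        refine tsum_congr fun k => ?_
        have e1 : ∀ j : ℕ, (alpha (r+1) k j : ℝ) * x ^ k * y ^ j =
            x ^ k * ((∑ t ∈ Finset.range (j+1), (bnat k t : ℝ)) * y ^ j) := by
          intro j
          rw [alpha_succ]
          simp only [hbdef]
          push_cast
          ring
        rw [tsum_congr e1, tsum_mul_left, cauchy_helper hy _ (hBs k)]
        ring
      -- Step B : ∑' k, x^k * B k equals triple sum V
      set g3 : ℕ × (ℕ × ℕ) → ℝ :=
        fun p => (alpha r p.1 (p.2.1 + p.2.2) : ℝ) * x ^ p.1 * X ^ p.2.1 * y ^ p.2.2 with hg3def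
      have hg3sum : Summable g3 := by
        have hw := (summable_pow_one_add (2*r+1) (abs_nonneg x) hx).mul_of_nonneg
          (summable_weight (r+1) (r+1) hX hy)
          (fun k => by positivity) (fun q => by positivity)
        refine Summable.of_norm_bounded hw fun p => ?_
        obtain ⟨k, m, t⟩ := p
        have hnorm : ‖g3 (k, m, t)‖ = (alpha r k (m+t) : ℝ) * |x| ^ k * |X| ^ m * |y| ^ t := by
          rw [hg3def]
          simp only [norm_mul, Real.norm_eq_abs, abs_pow, Nat.abs_cast]
        rw [hnorm]
        have h1 : ((alpha r k (m+t) : ℝ)) ≤ ((k:ℝ)+1)^(2*r+1) * (((m:ℝ)+1)^(r+1) * ((t:ℝ)+1)^(r+1)) := by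
          refine (alpha_cast_le r k (m+t)).trans ?_
          have h2 : (((m+t : ℕ) : ℝ) + 1) ^ (r+1) ≤ (((m:ℝ)+1) * ((t:ℝ)+1)) ^ (r+1) := by
            refine pow_le_pow_left₀ (by positivity) ?_ _
            push_cast
            nlinarith [mul_nonneg (Nat.cast_nonneg' m : (0:ℝ) ≤ m) (Nat.cast_nonneg' t : (0:ℝ) ≤ t)]
          calc ((k:ℝ)+1)^(2*r+1) * (((m+t : ℕ) : ℝ)+1)^(r+1)
              ≤ ((k:ℝ)+1)^(2*r+1) * ((((m:ℝ)+1) * ((t:ℝ)+1)) ^ (r+1)) := by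
                push_cast at h2 ⊢
                exact mul_le_mul_of_nonneg_left h2 (by positivity)
            _ = ((k:ℝ)+1)^(2*r+1) * (((m:ℝ)+1)^(r+1) * ((t:ℝ)+1)^(r+1)) := by rw [mul_pow]
        calc (alpha r k (m+t) : ℝ) * |x| ^ k * |X| ^ m * |y| ^ t
            ≤ (((k:ℝ)+1)^(2*r+1) * (((m:ℝ)+1)^(r+1) * ((t:ℝ)+1)^(r+1))) * |x| ^ k * |X| ^ m * |y| ^ t := by
              have : (0:ℝ) ≤ |x| ^ k * |X| ^ m * |y| ^ t := by positivity
              nlinarith [pow_nonneg (abs_nonneg x) k, pow_nonneg (abs_nonneg X) m,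
                pow_nonneg (abs_nonneg y) t, h1,
                mul_nonneg (mul_nonneg (pow_nonneg (abs_nonneg x) k) (pow_nonneg (abs_nonneg X) m)) (pow_nonneg (abs_nonneg y) t)]
          _ = ((k:ℝ)+1)^(2*r+1) * |x| ^ k * ((((m:ℝ)+1)^(r+1) * |X| ^ m) * (((t:ℝ)+1)^(r+1) * |y| ^ t)) := by
              ring
      set φ : ℕ × (ℕ × ℕ) → (ℕ × ℕ) × ℕ :=
        fun p => ((p.1 + p.2.1*(r+1), p.2.2), p.2.1) with hφdef
      set ψ : (ℕ × ℕ) × ℕ → ℝ :=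
        fun q => if q.2*(r+1) ≤ q.1.1 then
          (alpha r (q.1.1 - q.2*(r+1)) (q.2 + q.1.2) : ℝ) * x ^ q.1.1 * y ^ q.1.2 else 0
        with hψdef
      have hφinj : Function.Injective φ := by
        rintro ⟨k, m, t⟩ ⟨k', m', t'⟩ he
        rw [hφdef, Prod.ext_iff, Prod.ext_iff] at he
        obtain ⟨⟨e1, e2⟩, e3⟩ := he
        simp only at e1 e2 e3
        subst e3
        subst e2
        have : k = k' := Nat.add_right_cancel e1
        subst this
        rfl
      have hψφ : ∀ p, ψ (φ p) = g3 p := by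
        rintro ⟨k, m, t⟩
        simp only [hψdef, hφdef, hg3def]
        rw [if_pos (Nat.le_add_left _ _), Nat.add_sub_cancel, pow_add,
          show x ^ (m * (r+1)) = X ^ m from by rw [hXdef, ← pow_mul, mul_comm]]
        ring
      have hψsupp : ∀ q ∉ Set.range φ, ψ q = 0 := by
        rintro ⟨⟨k, t⟩, m⟩ hq
        simp only [hψdef]
        rw [if_neg]
        intro hcond
        refine hq ⟨(k - m*(r+1), m, t), ?_⟩
        simp only [hφdef]
        rw [Nat.sub_add_cancel hcond]
      have hψsum : Summable ψ := by
        rw [← Function.Injective.summable_iff hφinj hψsupp]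
        exact hg3sum.congr (fun p => (hψφ p).symm)
      have stepB : ∑' k : ℕ, x ^ k * B k = ∑' p, g3 p := by
        have e1 : ∑' q, ψ q = ∑' p, g3 p := by
          rw [← Function.Injective.tsum_eq hφinj (Function.support_subset_iff'.2 hψsupp)]
          exact tsum_congr hψφ
        have hBk : ∀ k : ℕ, ∑' t : ℕ, (bnat k t : ℝ) * x ^ k * y ^ t = x ^ k * B k := by
          intro k
          simp only [hBdef]
          rw [← tsum_mul_left]
          exact tsum_congr fun t => by ring
        have e2 : ∑' kt : ℕ × ℕ, (bnat kt.1 kt.2 : ℝ) * x ^ kt.1 * y ^ kt.2 =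
            ∑' k : ℕ, x ^ k * B k := by
          rw [Summable.tsum_prod hSb]
          exact tsum_congr hBk
        have e3 : ∀ kt : ℕ × ℕ, ∑' m : ℕ, ψ (kt, m) =
            (bnat kt.1 kt.2 : ℝ) * x ^ kt.1 * y ^ kt.2 := by
          rintro ⟨k, t⟩
          rw [tsum_eq_sum (s := Finset.range (k/(r+1)+1))
            (fun m hm => by
              simp only [hψdef]
              rw [Finset.mem_range] at hm
              rw [if_neg]
              intro hcond
              have h2 := (Nat.le_div_iff_mul_le (by omega : 0 < r+1)).2 hcond
              omega)]
          have hterm : ∀ m ∈ Finset.range (k/(r+1)+1), ψ ((k, t), m) =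
              (alpha r (k - m*(r+1)) (m + t) : ℝ) * x ^ k * y ^ t := by
            intro m hm
            rw [Finset.mem_range] at hm
            simp only [hψdef]
            rw [if_pos ((Nat.le_div_iff_mul_le (by omega : 0 < r+1)).1 (by omega : m ≤ k/(r+1)))]
          rw [Finset.sum_congr rfl hterm, hbdef]
          push_cast
          rw [Finset.sum_mul, Finset.sum_mul]
        rw [← e1, Summable.tsum_prod hψsum, ← e2]
        exact tsum_congr fun kt => (e3 kt).symm
      -- Step C : grouping by antidiagonals and telescoping
      have hWs : ∀ k : ℕ, Summable
          (fun q : ℕ × ℕ => (alpha r k (q.1+q.2) : ℝ) * X ^ q.1 * y ^ q.2) := by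
        intro k
        refine ((hg3sum.prod_factor k).mul_left ((x ^ k)⁻¹)).congr fun q => ?_
        simp only [hg3def]
        field_simp
      set W : ℕ → ℝ :=
        fun k => ∑' q : ℕ × ℕ, (alpha r k (q.1+q.2) : ℝ) * X ^ q.1 * y ^ q.2 with hWdef
      have hVW : ∑' p, g3 p = ∑' k : ℕ, x ^ k * W k := by
        rw [Summable.tsum_prod hg3sum]
        refine tsum_congr fun k => ?_
        simp only [hWdef]
        rw [← tsum_mul_left]
        refine tsum_congr fun q => ?_
        simp only [hg3def]
        ring
      have hWanti : ∀ k : ℕ, W k = ∑' n : ℕ,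
          (alpha r k n : ℝ) * ∑ i ∈ Finset.range (n+1), X ^ i * y ^ (n - i) := by
        intro k
        simp only [hWdef]
        exact antidiag_group (fun n => (alpha r k n : ℝ)) (hWs k)
      have hgeom2 : ∀ n : ℕ,
          (∑ i ∈ Finset.range (n+1), X ^ i * y ^ (n - i)) * (X - y) =
            X ^ (n+1) - y ^ (n+1) := by
        intro n
        have hg := geom_sum₂_mul X y (n+1)
        have : ∀ i, (n + 1 - 1 - i) = n - i := fun i => by omega
        simp only [this] at hg
        exact hg
      have hXW : ∀ k : ℕ, (X - y) * W k = X * AX k - y * AY k := by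
        intro k
        rw [hWanti k, ← tsum_mul_left]
        have e : ∀ n : ℕ,
            (X - y) * ((alpha r k n : ℝ) * ∑ i ∈ Finset.range (n+1), X ^ i * y ^ (n - i)) =
            X * ((alpha r k n : ℝ) * X ^ n) - y * ((alpha r k n : ℝ) * y ^ n) := by
          intro n
          have h2 := hgeom2 n
          calc (X - y) * ((alpha r k n : ℝ) * ∑ i ∈ Finset.range (n+1), X ^ i * y ^ (n - i))
              = (alpha r k n : ℝ) * ((∑ i ∈ Finset.range (n+1), X ^ i * y ^ (n - i)) * (X - y)) := by
                ring
            _ = (alpha r k n : ℝ) * (X ^ (n+1) - y ^ (n+1)) := by rw [h2]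
            _ = X * ((alpha r k n : ℝ) * X ^ n) - y * ((alpha r k n : ℝ) * y ^ n) := by
                rw [pow_succ, pow_succ]; ring
        rw [tsum_congr e, Summable.tsum_sub ((hAXs k).mul_left X) ((hAYs k).mul_left y),
          tsum_mul_left, tsum_mul_left]
      have hfibX : Summable (fun k : ℕ => x ^ k * AX k) := by
        have hh := (hSa_X.hasSum.prod_fiberwise
          (fun k => (hSa_X.prod_factor k).hasSum)).summable
        refine hh.congr fun k => ?_
        simp only [hAXdef]
        rw [← tsum_mul_left]
        exact tsum_congr fun n => by ring
      have hfibY : Summable (fun k : ℕ => x ^ k * AY k) := by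
        have hh := (hSa_y.hasSum.prod_fiberwise
          (fun k => (hSa_y.prod_factor k).hasSum)).summable
        refine hh.congr fun k => ?_
        simp only [hAYdef]
        rw [← tsum_mul_left]
        exact tsum_congr fun n => by ring
      have hSX : ∑' k : ℕ, x ^ k * AX k = F r x X := by
        rw [← hIHX, Summable.tsum_prod hSa_X]
        refine tsum_congr fun k => ?_
        simp only [hAXdef]
        rw [← tsum_mul_left]
        exact tsum_congr fun n => by ring
      have hSY : ∑' k : ℕ, x ^ k * AY k = F r x y := by
        rw [← hIHy, Summable.tsum_prod hSa_y]
        refine tsum_congr fun k => ?_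
        simp only [hAYdef]
        rw [← tsum_mul_left]
        exact tsum_congr fun n => by ring
      have hV : (X - y) * (∑' p, g3 p) = X * F r x X - y * F r x y := by
        rw [hVW, ← tsum_mul_left]
        have e : ∀ k : ℕ, (X - y) * (x ^ k * W k) =
            X * (x ^ k * AX k) - y * (x ^ k * AY k) := by
          intro k
          calc (X - y) * (x ^ k * W k) = x ^ k * ((X - y) * W k) := by ring
            _ = x ^ k * (X * AX k - y * AY k) := by rw [hXW k]
            _ = X * (x ^ k * AX k) - y * (x ^ k * AY k) := by ring
        rw [tsum_congr e, Summable.tsum_sub (hfibX.mul_left X) (hfibY.mul_left y),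
          tsum_mul_left, tsum_mul_left, hSX, hSY]
      rw [stepA, stepB]
      show _ = (F r x X * X - F r x y * y) / ((X - y) * (1 - y))
      rw [eq_div_iff (mul_ne_zero hd hy1)]
      calc (∑' p, g3 p) * (1-y)⁻¹ * ((X - y) * (1 - y))
          = ((X - y) * (∑' p, g3 p)) * ((1-y) * (1-y)⁻¹) := by ring
        _ = (X - y) * ∑' p, g3 p := by rw [mul_inv_cancel₀ hy1, mul_one]
        _ = F r x X * X - F r x y * y := by rw [hV]; ring
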